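/- Let d ≥ 1, let Σ be a symmetric positive-definite d×d real matrix, u ∈ ℝᵈ, C > 0, and f(v) = C·exp(−(1/2)·(v − u)·Σ⁻¹·(v − u)). Let β : ℝᵈ → ℝ be continuous, bounded, and strictly positive everywhere. With n_β = ∫ β f dv, p_β = ∫ v β f dv, E_β = ∫ |v|² β f dv, A_β = −∫ β ∇f dv, and B_β = −∫ β (v·∇f) dv, the effective temperature λ_β = (n_β·E_β − |p_β|²)/(n_β·B_β − A_β·p_β) satisfies 0 < λ_β < ∞. -/

import Mathlib

open MeasureTheory
open scoped RealInnerProductSpace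

section AuxStmt12

lemma auxStmt12_exp_integrable (d : ℕ) {b : ℝ} (hb : 0 < b) :
    Integrable (fun v : EuclideanSpace ℝ (Fin d) => Real.exp (-b * ‖v‖ ^ 2)) := by
  have h := (GaussianFourier.integrable_cexp_neg_mul_sq_norm_add
    (V := EuclideanSpace ℝ (Fin d)) (b := (b : ℂ)) (by simpa using hb) 0 0).norm
  have : (fun v : EuclideanSpace ℝ (Fin d) =>
      ‖Complex.exp (-(b:ℂ) * (‖v‖:ℂ) ^ 2 + 0 * ((inner ℝ (0 : EuclideanSpace ℝ (Fin d)) v : ℝ) : ℂ))‖)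
      = fun v : EuclideanSpace ℝ (Fin d) => Real.exp (-b * ‖v‖ ^ 2) := by
    funext v
    rw [Complex.norm_exp]
    norm_num
    left
    rw [← Complex.ofReal_pow]
    exact Complex.ofReal_re _
  rwa [this] at h

lemma auxStmt12_pow_exp_le {b : ℝ} (hb : 0 < b) (k : ℕ) (t : ℝ) (ht : 0 ≤ t) :
    t ^ k * Real.exp (-b * t ^ 2) ≤
      (k.factorial : ℝ) * Real.exp (1 / (2 * b)) * Real.exp (-(b / 2) * t ^ 2) := by
  have h1 : t ^ k ≤ (k.factorial : ℝ) * Real.exp t := by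
    have := Real.sum_le_exp_of_nonneg ht (k + 1)
    have h2 : t ^ k / (k.factorial : ℝ) ≤ Real.exp t := by
      refine le_trans ?_ this
      exact Finset.single_le_sum (f := fun i => t ^ i / (i.factorial : ℝ))
        (fun i _ => by positivity) (Finset.self_mem_range_succ k)
    have hk : (0:ℝ) < (k.factorial : ℝ) := by positivity
    calc t ^ k = t ^ k / (k.factorial : ℝ) * (k.factorial : ℝ) := by field_simp
    _ ≤ Real.exp t * (k.factorial : ℝ) := by
        exact mul_le_mul_of_nonneg_right h2 (le_of_lt hk)
    _ = (k.factorial : ℝ) * Real.exp t := by ring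
  have h3 : Real.exp t * Real.exp (-b * t ^ 2) ≤
      Real.exp (1 / (2 * b)) * Real.exp (-(b / 2) * t ^ 2) := by
    rw [← Real.exp_add, ← Real.exp_add]
    apply Real.exp_le_exp.2
    have key : t - b / 2 * t ^ 2 ≤ 1 / (2 * b) := by
      rw [le_div_iff₀ (by positivity)]
      nlinarith [sq_nonneg (b * t - 1)]
    linarith
  calc t ^ k * Real.exp (-b * t ^ 2) ≤ ((k.factorial : ℝ) * Real.exp t) * Real.exp (-b * t ^ 2) :=
        mul_le_mul_of_nonneg_right h1 (Real.exp_nonneg _)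
  _ = (k.factorial : ℝ) * (Real.exp t * Real.exp (-b * t ^ 2)) := by ring
  _ ≤ (k.factorial : ℝ) * (Real.exp (1 / (2 * b)) * Real.exp (-(b / 2) * t ^ 2)) := by
        exact mul_le_mul_of_nonneg_left h3 (by positivity)
  _ = (k.factorial : ℝ) * Real.exp (1 / (2 * b)) * Real.exp (-(b / 2) * t ^ 2) := by ring

lemma auxStmt12_pow_mul_exp_integrable (d : ℕ) {b : ℝ} (hb : 0 < b) (k : ℕ) :
    Integrable (fun v : EuclideanSpace ℝ (Fin d) => ‖v‖ ^ k * Real.exp (-b * ‖v‖ ^ 2)) := by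
  apply Integrable.mono' (((auxStmt12_exp_integrable d (by positivity : (0:ℝ) < b / 2))).const_mul
    ((k.factorial : ℝ) * Real.exp (1 / (2 * b))))
  · apply Continuous.aestronglyMeasurable
    fun_prop
  · refine Filter.Eventually.of_forall fun v => ?_
    rw [Real.norm_eq_abs, abs_of_nonneg (by positivity)]
    simpa [mul_assoc] using auxStmt12_pow_exp_le hb k ‖v‖ (norm_nonneg v)

lemma auxStmt12_integrable_of_bound {d : ℕ} {X : Type*} [NormedAddCommGroup X]
    (F : EuclideanSpace ℝ (Fin d) → X) (hF : AEStronglyMeasurable F volume)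
    (K c₁ : ℝ) (hc₁ : 0 < c₁)
    (hb : ∀ v, ‖F v‖ ≤ K * ((1 + ‖v‖) ^ 2 * Real.exp (-c₁ * ‖v‖ ^ 2))) :
    Integrable F (volume) := by
  have hg : Integrable (fun v : EuclideanSpace ℝ (Fin d) =>
      K * ((1 + ‖v‖) ^ 2 * Real.exp (-c₁ * ‖v‖ ^ 2))) := by
    have h0 := auxStmt12_pow_mul_exp_integrable d hc₁ 0
    have h1 := auxStmt12_pow_mul_exp_integrable d hc₁ 1
    have h2 := auxStmt12_pow_mul_exp_integrable d hc₁ 2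
    have := ((h0.add (h1.const_mul 2)).add h2).const_mul K
    refine this.congr (Filter.Eventually.of_forall fun v => ?_)
    simp only [Pi.add_apply, pow_zero, pow_one, one_mul]
    ring
  exact Integrable.mono' hg hF (Filter.Eventually.of_forall hb)

lemma auxStmt12_rho_integrable {d : ℕ} {X : Type*} [NormedAddCommGroup X] [NormedSpace ℝ X]
    (ρ : EuclideanSpace ℝ (Fin d) → ℝ) (hρc : Continuous ρ) (hρnn : ∀ v, 0 ≤ ρ v)
    (K0 c₁ : ℝ) (hc₁ : 0 < c₁)
    (hρle : ∀ v, ρ v ≤ K0 * Real.exp (-c₁ * ‖v‖ ^ 2))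
    (G : EuclideanSpace ℝ (Fin d) → X) (hGc : Continuous G)
    (K2 : ℝ) (hG : ∀ v, ‖G v‖ ≤ K2 * (1 + ‖v‖) ^ 2) :
    Integrable (fun v => ρ v • G v) := by
  apply auxStmt12_integrable_of_bound _ ((hρc.smul hGc).aestronglyMeasurable) (K0 * K2) c₁ hc₁
  intro v
  rw [Pi.smul_apply', norm_smul, Real.norm_eq_abs, abs_of_nonneg (hρnn v)]
  have h1 : 0 ≤ K0 * Real.exp (-c₁ * ‖v‖ ^ 2) := (hρnn v).trans (hρle v)
  have h2 := mul_le_mul (hρle v) (hG v) (norm_nonneg _) h1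
  calc ρ v * ‖G v‖ ≤ K0 * Real.exp (-c₁ * ‖v‖ ^ 2) * (K2 * (1 + ‖v‖) ^ 2) := h2
  _ = K0 * K2 * ((1 + ‖v‖) ^ 2 * Real.exp (-c₁ * ‖v‖ ^ 2)) := by ring

lemma auxStmt12_integral_pos {d : ℕ} (hd : 1 ≤ d) (g : EuclideanSpace ℝ (Fin d) → ℝ)
    (hg : Integrable g) (hnn : ∀ v, 0 ≤ g v) (m : EuclideanSpace ℝ (Fin d))
    (hpos : ∀ v, v ≠ m → 0 < g v) : 0 < ∫ v, g v := by
  have hnt : Nontrivial (EuclideanSpace ℝ (Fin d)) := by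
    apply Module.nontrivial_of_finrank_pos (R := ℝ)
    rw [finrank_euclideanSpace]; simpa using Nat.lt_of_succ_le hd
  rw [integral_pos_iff_support_of_nonneg_ae (Filter.Eventually.of_forall hnn) hg]
  have hsub : {m}ᶜ ⊆ Function.support g := fun v hv => (hpos v hv).ne'
  refine lt_of_lt_of_le ?_ (measure_mono hsub)
  obtain ⟨w, hw⟩ := exists_ne m
  exact (isOpen_compl_singleton).measure_pos volume ⟨w, hw⟩

lemma auxStmt12_quad_lower {d : ℕ} (hd : 1 ≤ d)
    (T : EuclideanSpace ℝ (Fin d) →L[ℝ] EuclideanSpace ℝ (Fin d))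
    (hTpos : ∀ x, x ≠ 0 → 0 < ⟪x, T x⟫) :
    ∃ c : ℝ, 0 < c ∧ ∀ x, c * ‖x‖ ^ 2 ≤ ⟪x, T x⟫ := by
  have hnt : Nontrivial (EuclideanSpace ℝ (Fin d)) := by
    apply Module.nontrivial_of_finrank_pos (R := ℝ)
    rw [finrank_euclideanSpace]; simpa using Nat.lt_of_succ_le hd
  set g : EuclideanSpace ℝ (Fin d) → ℝ := fun x => ⟪x, T x⟫ with hg
  have hgc : Continuous g := Continuous.inner continuous_id T.continuous
  obtain ⟨x₀, hx₀s, hmin⟩ := (isCompact_sphere (0 : EuclideanSpace ℝ (Fin d)) 1).exists_isMinOn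
    (NormedSpace.sphere_nonempty.2 zero_le_one) hgc.continuousOn
  have hx₀norm : ‖x₀‖ = 1 := by simpa using hx₀s
  have hx₀ne : x₀ ≠ 0 := by intro h; rw [h] at hx₀norm; simp at hx₀norm
  refine ⟨g x₀, hTpos x₀ hx₀ne, fun x => ?_⟩
  rcases eq_or_ne x 0 with rfl | hx
  · simp
  · have hxn : 0 < ‖x‖ := norm_pos_iff.2 hx
    set y : EuclideanSpace ℝ (Fin d) := ‖x‖⁻¹ • x with hy
    have hyn : ‖y‖ = 1 := by
      rw [hy, norm_smul, norm_inv, norm_norm, inv_mul_cancel₀ hxn.ne']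
    have hys : y ∈ Metric.sphere (0 : EuclideanSpace ℝ (Fin d)) 1 := by simpa using hyn
    have h1 : g x₀ ≤ g y := hmin hys
    have h2 : g y = ‖x‖⁻¹ ^ 2 * g x := by
      rw [hg]
      simp only [hy]
      rw [T.map_smul, real_inner_smul_left, real_inner_smul_right]
      ring
    have h3 : g x₀ * ‖x‖ ^ 2 ≤ g y * ‖x‖ ^ 2 :=
      mul_le_mul_of_nonneg_right h1 (by positivity)
    calc g x₀ * ‖x‖ ^ 2 ≤ g y * ‖x‖ ^ 2 := h3
    _ = g x := by rw [h2]; field_simp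

lemma auxStmt12_gradient {d : ℕ}
    (T : EuclideanSpace ℝ (Fin d) →L[ℝ] EuclideanSpace ℝ (Fin d))
    (hsym : ∀ x y : EuclideanSpace ℝ (Fin d), ⟪T x, y⟫ = ⟪x, T y⟫)
    (u : EuclideanSpace ℝ (Fin d)) (C : ℝ) (f : EuclideanSpace ℝ (Fin d) → ℝ)
    (hf : ∀ v, f v = C * Real.exp (-(1 / 2) * ⟪v - u, T (v - u)⟫))
    (v : EuclideanSpace ℝ (Fin d)) :
    HasGradientAt f (-(f v) • T (v - u)) v := by
  have h1 : HasFDerivAt (fun x : EuclideanSpace ℝ (Fin d) => x - u)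
      (ContinuousLinearMap.id ℝ (EuclideanSpace ℝ (Fin d))) v :=
    (hasFDerivAt_id v).sub_const u
  have h2 : HasFDerivAt (fun x : EuclideanSpace ℝ (Fin d) => T (x - u)) T v := by
    have := T.hasFDerivAt.comp v h1
    simpa only [Function.comp_def, ContinuousLinearMap.comp_id] using this
  have hq : HasFDerivAt (fun x : EuclideanSpace ℝ (Fin d) => ⟪x - u, T (x - u)⟫)
      ((fderivInnerCLM ℝ (v - u, T (v - u))).comp
        ((ContinuousLinearMap.id ℝ (EuclideanSpace ℝ (Fin d))).prod T)) v := h1.inner ℝ h2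
  set q : EuclideanSpace ℝ (Fin d) → ℝ := fun x => ⟪x - u, T (x - u)⟫ with hqdef
  set L : EuclideanSpace ℝ (Fin d) →L[ℝ] ℝ := (fderivInnerCLM ℝ (v - u, T (v - u))).comp
        ((ContinuousLinearMap.id ℝ (EuclideanSpace ℝ (Fin d))).prod T) with hL
  have h3 : HasDerivAt (fun y : ℝ => C * Real.exp (-(1 / 2) * y))
      (C * Real.exp (-(1 / 2) * q v) * (-(1 / 2))) (q v) := by
    have ha : HasDerivAt (fun y : ℝ => -(1 / 2) * y) (-(1 / 2)) (q v) := by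
      simpa using (hasDerivAt_id (q v)).const_mul (-(1 / 2) : ℝ)
    have hb := (Real.hasDerivAt_exp (-(1 / 2) * q v)).comp (q v) ha
    have hc := hb.const_mul C
    rw [show C * Real.exp (-(1 / 2) * q v) * (-(1 / 2)) = C * (Real.exp (-(1 / 2) * q v) * -(1 / 2)) by ring]
    exact hc
  have h4 : HasFDerivAt f ((C * Real.exp (-(1 / 2) * q v) * (-(1 / 2))) • L) v := by
    have h5 := h3.comp_hasFDerivAt v hq
    have heq : ((fun y : ℝ => C * Real.exp (-(1 / 2) * y)) ∘ q) = f := by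
      funext x; rw [hf x]; rfl
    rw [← heq]
    exact h5
  rw [hasGradientAt_iff_hasFDerivAt]
  refine h4.congr_fderiv ?_
  symm
  apply ContinuousLinearMap.ext
  intro h
  have hfv : f v = C * Real.exp (-(1 / 2) * q v) := hf v
  simp only [InnerProductSpace.toDual_apply_apply, ContinuousLinearMap.smul_apply, hL,
    ContinuousLinearMap.comp_apply, ContinuousLinearMap.prod_apply,
    ContinuousLinearMap.coe_id', id_eq, fderivInnerCLM_apply]
  rw [real_inner_smul_left]
  have hs : ⟪v - u, T h⟫ = ⟪T (v - u), h⟫ := (hsym (v - u) h).symm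
  rw [hs, real_inner_comm (T (v - u)) h, hfv]
  rw [smul_eq_mul]
  ring

lemma auxStmt12_posdef_inner {d : ℕ} (A : Matrix (Fin d) (Fin d) ℝ) (hA : A.PosDef)
    (x : EuclideanSpace ℝ (Fin d)) (hx : x ≠ 0) :
    0 < ⟪x, Matrix.toEuclideanLin A x⟫ := by
  have hx' : (WithLp.equiv 2 (Fin d → ℝ)) x ≠ 0 := by
    intro h
    apply hx
    exact (WithLp.equiv 2 (Fin d → ℝ)).injective (by simpa using h)
  have h := hA.re_dotProduct_pos hx'
  simpa [dotProduct, PiLp.inner_apply, Matrix.toEuclideanLin_apply,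
    Matrix.mulVec, RCLike.inner_apply, mul_comm] using h

end AuxStmt12

set_option maxHeartbeats 1600000 in
/-- Strict positivity and finiteness of the effective temperature
λ_β = (n_β·E_β − |p_β|²)/(n_β·B_β − A_β·p_β) for a multivariate Gaussian
distribution and a continuous, bounded, strictly positive weight β. -/
theorem stmt12 (d : ℕ) (hd : 1 ≤ d)
    (S : Matrix (Fin d) (Fin d) ℝ) (hS : S.PosDef)
    (u : EuclideanSpace ℝ (Fin d)) (C : ℝ) (hC : 0 < C)
    (f : EuclideanSpace ℝ (Fin d) → ℝ)
    (hf : ∀ v, f v =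
      C * Real.exp (-(1 / 2) * ⟪v - u, Matrix.toEuclideanLin S⁻¹ (v - u)⟫))
    (β : EuclideanSpace ℝ (Fin d) → ℝ)
    (hβc : Continuous β) (hβb : ∃ M, ∀ v, |β v| ≤ M) (hβpos : ∀ v, 0 < β v)
    (nβ Eβ Bβ : ℝ) (Aβ pβ : EuclideanSpace ℝ (Fin d))
    (hn : nβ = ∫ v, β v * f v)
    (hp : pβ = ∫ v, (β v * f v) • v)
    (hE : Eβ = ∫ v, ‖v‖ ^ 2 * (β v * f v))
    (hA : Aβ = -∫ v, β v • gradient f v)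
    (hB : Bβ = -∫ v, β v * ⟪v, gradient f v⟫)
    (lβ : ℝ) (hl : lβ = (nβ * Eβ - ‖pβ‖ ^ 2) / (nβ * Bβ - ⟪Aβ, pβ⟫)) :
    0 < lβ := by
  classical
  -- the continuous linear map associated with S⁻¹
  set T : EuclideanSpace ℝ (Fin d) →L[ℝ] EuclideanSpace ℝ (Fin d) :=
    LinearMap.toContinuousLinearMap (Matrix.toEuclideanLin S⁻¹) with hTdef
  have hTapp : ∀ x, T x = Matrix.toEuclideanLin S⁻¹ x := fun x => rfl
  have hsymL : (Matrix.toEuclideanLin S⁻¹).IsSymmetric :=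
    Matrix.isHermitian_iff_isSymmetric.mp hS.1.inv
  have hsym : ∀ x y, ⟪T x, y⟫ = ⟪x, T y⟫ := fun x y => by
    rw [hTapp, hTapp]; exact hsymL x y
  have hTpos : ∀ x, x ≠ 0 → 0 < ⟪x, T x⟫ := fun x hx => by
    rw [hTapp]; exact auxStmt12_posdef_inner S⁻¹ hS.inv x hx
  have hTnn : ∀ x, 0 ≤ ⟪x, T x⟫ := fun x => by
    rcases eq_or_ne x 0 with rfl | hx
    · simp
    · exact (hTpos x hx).le
  have hf' : ∀ v, f v = C * Real.exp (-(1 / 2) * ⟪v - u, T (v - u)⟫) := fun v => by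
    rw [hf v, hTapp]
  -- gradient of f
  have hfgrad : ∀ v, HasGradientAt f (-(f v) • T (v - u)) v :=
    auxStmt12_gradient T hsym u C f hf'
  have hgrad : ∀ v, gradient f v = -(f v) • T (v - u) := fun v => (hfgrad v).gradient
  -- positivity and continuity of f
  have hfpos : ∀ v, 0 < f v := fun v => by rw [hf' v]; positivity
  have hfc : Continuous f := by
    have : f = fun v => C * Real.exp (-(1 / 2) * ⟪v - u, T (v - u)⟫) := funext hf'
    rw [this]
    exact continuous_const.mul (Real.continuous_exp.comp (continuous_const.mul
      (Continuous.inner (continuous_id.sub continuous_const)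
        (T.continuous.comp (continuous_id.sub continuous_const)))))
  -- the density ρ
  set ρ : EuclideanSpace ℝ (Fin d) → ℝ := fun v => β v * f v with hρdef
  have hρc : Continuous ρ := hβc.mul hfc
  have hρpos : ∀ v, 0 < ρ v := fun v => mul_pos (hβpos v) (hfpos v)
  have hρnn : ∀ v, 0 ≤ ρ v := fun v => (hρpos v).le
  -- Gaussian upper bound for f
  obtain ⟨c, hc, hlow⟩ := auxStmt12_quad_lower hd T hTpos
  set c₁ : ℝ := c / 4 with hc₁def
  have hc₁ : 0 < c₁ := by positivity
  set C₁ : ℝ := C * Real.exp (c / 2 * ‖u‖ ^ 2) with hC₁def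
  have hfle : ∀ v, f v ≤ C₁ * Real.exp (-c₁ * ‖v‖ ^ 2) := by
    intro v
    rw [hf' v, hC₁def, mul_assoc, ← Real.exp_add]
    apply mul_le_mul_of_nonneg_left _ hC.le
    apply Real.exp_le_exp.2
    have h1 : c * ‖v - u‖ ^ 2 ≤ ⟪v - u, T (v - u)⟫ := hlow (v - u)
    have h2 : (‖v‖ - ‖u‖) ^ 2 ≤ ‖v - u‖ ^ 2 := by
      have h3 := abs_norm_sub_norm_le v u
      nlinarith [sq_abs (‖v‖ - ‖u‖), norm_nonneg (v - u), abs_nonneg (‖v‖ - ‖u‖)]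
    rw [hc₁def]
    nlinarith [h1, mul_le_mul_of_nonneg_left h2 (le_of_lt hc),
      mul_nonneg hc.le (sq_nonneg (‖v‖ - 2 * ‖u‖))]
  obtain ⟨Mb, hMb⟩ := hβb
  have hρle : ∀ v, ρ v ≤ Mb * C₁ * Real.exp (-c₁ * ‖v‖ ^ 2) := by
    intro v
    have hb1 : β v ≤ Mb := (le_abs_self _).trans (hMb v)
    have hb2 : 0 ≤ Mb := (abs_nonneg _).trans (hMb v)
    calc ρ v = β v * f v := rfl
    _ ≤ Mb * (C₁ * Real.exp (-c₁ * ‖v‖ ^ 2)) :=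
        mul_le_mul hb1 (hfle v) (hfpos v).le hb2
    _ = Mb * C₁ * Real.exp (-c₁ * ‖v‖ ^ 2) := by ring
  -- the center m
  obtain ⟨m, hmdef⟩ : ∃ m : EuclideanSpace ℝ (Fin d), m = nβ⁻¹ • pβ := ⟨_, rfl⟩
  -- integrability of all relevant integrands
  have hint : ∀ {X : Type} [NormedAddCommGroup X] [NormedSpace ℝ X]
      (G : EuclideanSpace ℝ (Fin d) → X), Continuous G →
      ∀ (K2 : ℝ), (∀ v, ‖G v‖ ≤ K2 * (1 + ‖v‖) ^ 2) → Integrable (fun v => ρ v • G v) := by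
    intro X _ _ G hGc K2 hG
    exact auxStmt12_rho_integrable ρ hρc hρnn (Mb * C₁) c₁ hc₁ hρle G hGc K2 hG
  have Iρ : Integrable ρ := by
    have := hint (fun _ => (1 : ℝ)) continuous_const 1 (fun v => by
      simp only [norm_one, one_mul]
      nlinarith [norm_nonneg v])
    simpa using this
  have Iv : Integrable (fun v : EuclideanSpace ℝ (Fin d) => ρ v • v) := by
    exact hint (fun v => v) continuous_id 1 (fun v => by
      beta_reduce
      nlinarith [norm_nonneg v])
  have IE : Integrable (fun v : EuclideanSpace ℝ (Fin d) => ρ v * ‖v‖ ^ 2) := by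
    have := hint (fun v => ‖v‖ ^ 2) (by fun_prop) 1 (fun v => by
      beta_reduce
      rw [Real.norm_eq_abs, abs_of_nonneg (by positivity)]
      nlinarith [norm_nonneg v])
    simpa [smul_eq_mul] using this
  have IA : Integrable (fun v : EuclideanSpace ℝ (Fin d) => ρ v • T (v - u)) := by
    refine hint (fun v => T (v - u)) (T.continuous.comp (continuous_id.sub continuous_const))
      (‖T‖ * (1 + ‖u‖)) (fun v => ?_)
    beta_reduce
    have h1 : ‖T (v - u)‖ ≤ ‖T‖ * ‖v - u‖ := T.le_opNorm _
    have h2 : ‖v - u‖ ≤ ‖v‖ + ‖u‖ := norm_sub_le v u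
    have h3 : ‖v‖ + ‖u‖ ≤ (1 + ‖u‖) * (1 + ‖v‖) ^ 2 := by
      nlinarith [norm_nonneg v, norm_nonneg u, mul_nonneg (norm_nonneg u) (norm_nonneg v),
        mul_nonneg (norm_nonneg u) (sq_nonneg ‖v‖), sq_nonneg ‖v‖]
    calc ‖T (v - u)‖ ≤ ‖T‖ * ‖v - u‖ := h1
    _ ≤ ‖T‖ * ((1 + ‖u‖) * (1 + ‖v‖) ^ 2) :=
        mul_le_mul_of_nonneg_left (h2.trans h3) T.opNorm_nonneg
    _ = ‖T‖ * (1 + ‖u‖) * (1 + ‖v‖) ^ 2 := by ring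
  have IB : Integrable (fun v : EuclideanSpace ℝ (Fin d) => ρ v * ⟪v, T (v - u)⟫) := by
    have := hint (fun v => ⟪v, T (v - u)⟫)
      (Continuous.inner continuous_id (T.continuous.comp (continuous_id.sub continuous_const)))
      (‖T‖ * (1 + ‖u‖)) (fun v => by
        beta_reduce
        rw [Real.norm_eq_abs]
        have h1 := abs_real_inner_le_norm v (T (v - u))
        have h2 : ‖T (v - u)‖ ≤ ‖T‖ * (‖v‖ + ‖u‖) :=
          (T.le_opNorm _).trans (mul_le_mul_of_nonneg_left (norm_sub_le v u) T.opNorm_nonneg)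
        have h4 : ‖v‖ * (‖v‖ + ‖u‖) ≤ (1 + ‖u‖) * (1 + ‖v‖) ^ 2 := by
          nlinarith [norm_nonneg v, norm_nonneg u, mul_nonneg (norm_nonneg u) (norm_nonneg v),
            mul_nonneg (norm_nonneg u) (sq_nonneg ‖v‖), sq_nonneg ‖v‖]
        calc |⟪v, T (v - u)⟫| ≤ ‖v‖ * ‖T (v - u)‖ := h1
        _ ≤ ‖v‖ * (‖T‖ * (‖v‖ + ‖u‖)) := mul_le_mul_of_nonneg_left h2 (norm_nonneg v)
        _ = ‖T‖ * (‖v‖ * (‖v‖ + ‖u‖)) := by ring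
        _ ≤ ‖T‖ * ((1 + ‖u‖) * (1 + ‖v‖) ^ 2) := mul_le_mul_of_nonneg_left h4 T.opNorm_nonneg
        _ = ‖T‖ * (1 + ‖u‖) * (1 + ‖v‖) ^ 2 := by ring)
    simpa [smul_eq_mul] using this
  have IN : Integrable (fun v : EuclideanSpace ℝ (Fin d) => ρ v * ‖v - m‖ ^ 2) := by
    have := hint (fun v => ‖v - m‖ ^ 2)
      (by fun_prop) ((1 + ‖m‖) ^ 2) (fun v => by
        beta_reduce
        rw [Real.norm_eq_abs, abs_of_nonneg (by positivity)]
        have h3 : ‖v - m‖ ≤ (1 + ‖m‖) * (1 + ‖v‖) := (norm_sub_le v m).trans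
          (by nlinarith [norm_nonneg v, norm_nonneg m])
        calc ‖v - m‖ ^ 2 ≤ ((1 + ‖m‖) * (1 + ‖v‖)) ^ 2 :=
            pow_le_pow_left₀ (norm_nonneg _) h3 2
        _ = (1 + ‖m‖) ^ 2 * (1 + ‖v‖) ^ 2 := by ring)
    simpa [smul_eq_mul] using this
  have ID : Integrable (fun v : EuclideanSpace ℝ (Fin d) => ρ v * ⟪v - m, T (v - m)⟫) := by
    have := hint (fun v => ⟪v - m, T (v - m)⟫)
      (Continuous.inner (continuous_id.sub continuous_const)
        (T.continuous.comp (continuous_id.sub continuous_const)))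
      (‖T‖ * (1 + ‖m‖) ^ 2) (fun v => by
        beta_reduce
        rw [Real.norm_eq_abs]
        have h1 := abs_real_inner_le_norm (v - m) (T (v - m))
        have h2 : ‖T (v - m)‖ ≤ ‖T‖ * ‖v - m‖ := T.le_opNorm _
        have h3 : ‖v - m‖ ≤ (1 + ‖m‖) * (1 + ‖v‖) := (norm_sub_le v m).trans
          (by nlinarith [norm_nonneg v, norm_nonneg m])
        have h5 : ‖v - m‖ * ‖v - m‖ ≤ ((1 + ‖m‖) * (1 + ‖v‖)) * ((1 + ‖m‖) * (1 + ‖v‖)) :=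
          mul_le_mul h3 h3 (norm_nonneg _) (by positivity)
        calc |⟪v - m, T (v - m)⟫| ≤ ‖v - m‖ * ‖T (v - m)‖ := h1
        _ ≤ ‖v - m‖ * (‖T‖ * ‖v - m‖) := mul_le_mul_of_nonneg_left h2 (norm_nonneg _)
        _ = ‖T‖ * (‖v - m‖ * ‖v - m‖) := by ring
        _ ≤ ‖T‖ * (((1 + ‖m‖) * (1 + ‖v‖)) * ((1 + ‖m‖) * (1 + ‖v‖))) :=
            mul_le_mul_of_nonneg_left h5 T.opNorm_nonneg
        _ = ‖T‖ * (1 + ‖m‖) ^ 2 * (1 + ‖v‖) ^ 2 := by ring)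
    simpa [smul_eq_mul] using this
  have Ivm : Integrable (fun v : EuclideanSpace ℝ (Fin d) => ρ v • (v - m)) := by
    have : (fun v : EuclideanSpace ℝ (Fin d) => ρ v • (v - m))
        = fun v => ρ v • v - ρ v • m := by
      funext v; rw [smul_sub]
    rw [this]
    exact Iv.sub (Iρ.smul_const m)
  -- basic integral identities
  have hnρ : nβ = ∫ v, ρ v := hn
  have hpρ : pβ = ∫ v, ρ v • v := hp
  have hEρ : Eβ = ∫ v, ρ v * ‖v‖ ^ 2 := by
    rw [hE]; congr 1; funext v; rw [mul_comm]
  have hnpos : 0 < nβ := by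
    rw [hnρ]
    exact auxStmt12_integral_pos hd ρ Iρ hρnn 0 (fun v _ => hρpos v)
  have hnne : nβ ≠ 0 := hnpos.ne'
  -- value of Aβ and Bβ
  have hAval : Aβ = ∫ v, ρ v • T (v - u) := by
    rw [hA]
    have key : (fun v => β v • gradient f v)
        = fun v => -(ρ v • T (v - u)) := by
      funext v
      rw [hgrad v, smul_smul, show β v * -(f v) = -(β v * f v) by ring, neg_smul]
    rw [key, integral_neg, neg_neg]
  have hBval : Bβ = ∫ v, ρ v * ⟪v, T (v - u)⟫ := by
    rw [hB]
    have key : (fun v => β v * ⟪v, gradient f v⟫)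
        = fun v => -(ρ v * ⟪v, T (v - u)⟫) := by
      funext v
      rw [hgrad v, real_inner_smul_right]
      ring
    rw [key, integral_neg, neg_neg]
  -- numerator identity
  have hNval : ∫ v, ρ v * ‖v - m‖ ^ 2 = Eβ - 2 * ⟪m, pβ⟫ + ‖m‖ ^ 2 * nβ := by
    have key : (fun v => ρ v * ‖v - m‖ ^ 2)
        = fun v => (ρ v * ‖v‖ ^ 2 - 2 * ⟪m, ρ v • v⟫) + ‖m‖ ^ 2 * ρ v := by
      funext v
      rw [norm_sub_sq_real, show ⟪v, m⟫ = ⟪m, v⟫ from real_inner_comm m v,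
        real_inner_smul_right]
      ring
    have I3 : Integrable (fun v : EuclideanSpace ℝ (Fin d) => 2 * ⟪m, ρ v • v⟫) :=
      (Iv.const_inner m).const_mul 2
    have I1 : Integrable (fun v : EuclideanSpace ℝ (Fin d) =>
        ρ v * ‖v‖ ^ 2 - 2 * ⟪m, ρ v • v⟫) := IE.sub I3
    have I2 : Integrable (fun v : EuclideanSpace ℝ (Fin d) => ‖m‖ ^ 2 * ρ v) :=
      Iρ.const_mul _
    rw [key, integral_add I1 I2, integral_sub IE I3, integral_const_mul,
      integral_inner Iv m, integral_const_mul, ← hEρ, ← hpρ, ← hnρ]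
  have hNpos : 0 < ∫ v, ρ v * ‖v - m‖ ^ 2 := by
    apply auxStmt12_integral_pos hd _ IN (fun v => mul_nonneg (hρnn v) (sq_nonneg _)) m
    intro v hv
    have : 0 < ‖v - m‖ := by
      rw [norm_pos_iff]; exact sub_ne_zero.2 hv
    exact mul_pos (hρpos v) (by positivity)
  have hNum : nβ * Eβ - ‖pβ‖ ^ 2 = nβ * ∫ v, ρ v * ‖v - m‖ ^ 2 := by
    rw [hNval, hmdef, real_inner_smul_left, real_inner_self_eq_norm_sq, norm_smul,
      Real.norm_eq_abs, abs_of_pos (inv_pos.2 hnpos)]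
    field_simp
    ring
  -- denominator identity
  have hD1 : ∫ v, ρ v * ⟪v - m, T (v - u)⟫ = Bβ - ⟪m, Aβ⟫ := by
    have key : (fun v => ρ v * ⟪v - m, T (v - u)⟫)
        = fun v => ρ v * ⟪v, T (v - u)⟫ - ⟪m, ρ v • T (v - u)⟫ := by
      funext v
      rw [inner_sub_left, real_inner_smul_right]
      ring
    have I4 : Integrable (fun v : EuclideanSpace ℝ (Fin d) => ⟪m, ρ v • T (v - u)⟫) :=
      IA.const_inner m
    rw [key, integral_sub IB I4, integral_inner IA m, ← hAval, ← hBval]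
  have hvm0 : ∫ v, ρ v • (v - m) = 0 := by
    have key : (fun v : EuclideanSpace ℝ (Fin d) => ρ v • (v - m))
        = fun v => ρ v • v - ρ v • m := by
      funext v; rw [smul_sub]
    have I5 : Integrable (fun v : EuclideanSpace ℝ (Fin d) => ρ v • m) := Iρ.smul_const m
    rw [key, integral_sub Iv I5, integral_smul_const, ← hpρ, ← hnρ, hmdef,
      smul_smul, mul_inv_cancel₀ hnne, one_smul, sub_self]
  have hD2 : ∫ v, ρ v * ⟪v - m, T (v - u)⟫ = ∫ v, ρ v * ⟪v - m, T (v - m)⟫ := by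
    have key : (fun v => ρ v * ⟪v - m, T (v - u)⟫)
        = fun v => ρ v * ⟪v - m, T (v - m)⟫ + ⟪T (m - u), ρ v • (v - m)⟫ := by
      funext v
      have hsplit : T (v - u) = T (v - m) + T (m - u) := by
        rw [← T.map_add]
        congr 1
        abel
      rw [hsplit, inner_add_right, real_inner_smul_right,
        real_inner_comm (v - m) (T (m - u))]
      ring
    have I6 : Integrable (fun v : EuclideanSpace ℝ (Fin d) => ⟪T (m - u), ρ v • (v - m)⟫) :=
      Ivm.const_inner _
    rw [key, integral_add ID I6, integral_inner Ivm, hvm0, inner_zero_right, add_zero]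
  have hDpos : 0 < ∫ v, ρ v * ⟪v - m, T (v - m)⟫ := by
    apply auxStmt12_integral_pos hd _ ID (fun v => mul_nonneg (hρnn v) (hTnn _)) m
    intro v hv
    exact mul_pos (hρpos v) (hTpos (v - m) (sub_ne_zero.2 hv))
  have hDen : nβ * Bβ - ⟪Aβ, pβ⟫ = nβ * ∫ v, ρ v * ⟪v - m, T (v - m)⟫ := by
    rw [← hD2, hD1]
    rw [hmdef, real_inner_smul_left, real_inner_comm Aβ pβ]
    field_simp
  rw [hl]
  apply div_pos
  · rw [hNum]; exact mul_pos hnpos hNpos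
  · rw [hDen]; exact mul_pos hnpos hDpos
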